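/- For any linear map E : M_n(ℂ) → M_m(ℂ), orthonormal basis {|i⟩} of ℂⁿ, and state ρ and observable B on the respective spaces, the two-time expectation value of a dichotomic observable A = 2P - 1 followed by a light-touch observable B with respect to (E, ρ) equals Tr[(E ⋆ ρ)(A ⊗ B)], where E ⋆ ρ = ½{ρ ⊗ 1, J[E]} with J[E] = Σ_{i,j} |i⟩⟨j| ⊗ E(|j⟩⟨i|). -/

import Mathlib

open Matrix
open scoped Kronecker

noncomputable section

/-- The Jamiolkowski matrix `J[E] = ∑ i j, |i⟩⟨j| ⊗ E(|j⟩⟨i|)`. -/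
def Jam {n m : ℕ} (E : Matrix (Fin n) (Fin n) ℂ → Matrix (Fin m) (Fin m) ℂ) :
    Matrix (Fin n × Fin m) (Fin n × Fin m) ℂ :=
  ∑ i : Fin n, ∑ j : Fin n,
    (Matrix.single i j (1 : ℂ)) ⊗ₖ E (Matrix.single j i (1 : ℂ))

/-- The spatiotemporal product `E ⋆ ρ = ½{ρ ⊗ 1, J[E]}`. -/
def sot {n m : ℕ} (E : Matrix (Fin n) (Fin n) ℂ → Matrix (Fin m) (Fin m) ℂ)
    (ρ : Matrix (Fin n) (Fin n) ℂ) : Matrix (Fin n × Fin m) (Fin n × Fin m) ℂ :=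
  (1 / 2 : ℂ) • ((ρ ⊗ₖ (1 : Matrix (Fin m) (Fin m) ℂ)) * Jam E
      + Jam E * (ρ ⊗ₖ (1 : Matrix (Fin m) (Fin m) ℂ)))

/-- The swap map `S(σ ⊗ τ) = τ ⊗ σ` on matrix algebras. -/
def swapM {m n : ℕ} (X : Matrix (Fin m × Fin n) (Fin m × Fin n) ℂ) :
    Matrix (Fin n × Fin m) (Fin n × Fin m) ℂ :=
  X.submatrix (fun p => (p.2, p.1)) (fun p => (p.2, p.1))

/-- The Choi matrix `C[E] = ∑ i j, |i⟩⟨j| ⊗ E(|i⟩⟨j|)`. -/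
def ChoiM {n m : ℕ} (E : Matrix (Fin n) (Fin n) ℂ → Matrix (Fin m) (Fin m) ℂ) :
    Matrix (Fin n × Fin m) (Fin n × Fin m) ℂ :=
  ∑ i : Fin n, ∑ j : Fin n,
    (Matrix.single i j (1 : ℂ)) ⊗ₖ E (Matrix.single i j (1 : ℂ))
open scoped ComplexOrder

/-- Key lemma: `Tr[J[E] (X ⊗ B)] = Tr[E(X) B]`. -/
lemma trace_Jam_mul {n m : ℕ}
    (E : Matrix (Fin n) (Fin n) ℂ →ₗ[ℂ] Matrix (Fin m) (Fin m) ℂ)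
    (X : Matrix (Fin n) (Fin n) ℂ) (B : Matrix (Fin m) (Fin m) ℂ) :
    Matrix.trace (Jam (⇑E) * (X ⊗ₖ B)) = Matrix.trace (E X * B) := by
  have hX : X = ∑ j : Fin n, ∑ i : Fin n, (X j i) • Matrix.single j i (1 : ℂ) := by
    conv_lhs => rw [matrix_eq_sum_single X]
    simp [Matrix.smul_single, smul_eq_mul, mul_one]
  conv_rhs => rw [hX]
  simp only [map_sum, _root_.map_smul, Finset.sum_mul, smul_mul_assoc, Matrix.trace_sum,
    Matrix.trace_smul]
  conv_rhs => rw [Finset.sum_comm]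
  unfold Jam
  rw [Finset.sum_mul, Matrix.trace_sum]
  refine Finset.sum_congr rfl fun i _ => ?_
  rw [Finset.sum_mul, Matrix.trace_sum]
  refine Finset.sum_congr rfl fun j _ => ?_
  rw [← Matrix.mul_kronecker_mul, Matrix.trace_kronecker]
  have : Matrix.trace (Matrix.single i j (1 : ℂ) * X) = X j i := by
    simp [Matrix.trace, Matrix.mul_apply, Matrix.single, Matrix.diag, ite_and]
  rw [this, smul_eq_mul]

/-- The two-time expectation value of a dichotomic observable `A = 2P - 1` followed by a
light-touch observable `B` with respect to `(E, ρ)` equals `Tr[(E ⋆ ρ)(A ⊗ B)]`. -/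
theorem two_time_eq_sot_trace {n m : ℕ}
    (E : Matrix (Fin n) (Fin n) ℂ →ₗ[ℂ] Matrix (Fin m) (Fin m) ℂ)
    (ρ P : Matrix (Fin n) (Fin n) ℂ) (B : Matrix (Fin m) (Fin m) ℂ)
    (hρ : ρ.PosSemidef) (hρtr : ρ.trace = 1)
    (hP : P * P = P) (hPh : Pᴴ = P)
    (hB : Bᴴ = B)
    (hBlt : ∃ lam : ℝ, B * B = ((lam ^ 2 : ℝ) : ℂ) • (1 : Matrix (Fin m) (Fin m) ℂ)) :
    Matrix.trace (E (P * ρ * P) * B) - Matrix.trace (E ((1 - P) * ρ * (1 - P)) * B)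
      = Matrix.trace (sot (⇑E) ρ * (((2 : ℂ) • P - 1) ⊗ₖ B)) := by
  set A : Matrix (Fin n) (Fin n) ℂ := (2 : ℂ) • P - 1 with hA
  -- RHS computation
  have hR : Matrix.trace (sot (⇑E) ρ * (A ⊗ₖ B))
      = (1 / 2 : ℂ) * (Matrix.trace (E (A * ρ) * B) + Matrix.trace (E (ρ * A) * B)) := by
    unfold sot
    rw [Matrix.smul_mul, Matrix.trace_smul, smul_eq_mul, Matrix.add_mul, Matrix.trace_add]
    congr 1
    congr 1
    · rw [Matrix.mul_assoc, Matrix.trace_mul_comm, Matrix.mul_assoc,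
        ← Matrix.mul_kronecker_mul, Matrix.mul_one, trace_Jam_mul]
    · rw [Matrix.mul_assoc, ← Matrix.mul_kronecker_mul, Matrix.one_mul, trace_Jam_mul]
  rw [hR]
  -- LHS computation
  have hZ : P * ρ * P - (1 - P) * ρ * (1 - P)
      = (1 / 2 : ℂ) • (A * ρ) + (1 / 2 : ℂ) • (ρ * A) := by
    rw [hA]
    simp only [Matrix.sub_mul, Matrix.mul_sub, Matrix.one_mul, Matrix.mul_one,
      Matrix.smul_mul, Matrix.mul_smul, smul_sub, smul_smul]
    module
  have : Matrix.trace (E (P * ρ * P) * B) - Matrix.trace (E ((1 - P) * ρ * (1 - P)) * B)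
      = Matrix.trace (E (P * ρ * P - (1 - P) * ρ * (1 - P)) * B) := by
    rw [← Matrix.trace_sub, ← Matrix.sub_mul, ← map_sub]
  rw [this, hZ, map_add, _root_.map_smul, _root_.map_smul, Matrix.add_mul,
    Matrix.trace_add, Matrix.smul_mul, Matrix.smul_mul, Matrix.trace_smul, Matrix.trace_smul,
    smul_eq_mul, smul_eq_mul]
  ring
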